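/- Let A be a commutative ℚ-algebra and a, b ∈ A. Define the formal power series f = ∑_{k≥0} (∏_{i=0}^{k−1}(b + i·a))·X^k/k! ∈ A[[X]]. Then (1 − a·X)·f' = b·f, where f' denotes the formal derivative of f. -/

import Mathlib

/-- The formal power series `f = ∑_k (∏_{i<k}(b + i·a))·X^k/k!` satisfies the
differential equation `(1 − a·X)·f' = b·f`. -/
theorem stmt11 {A : Type*} [CommRing A] [Algebra ℚ A] (a b : A) :
    (1 - PowerSeries.C a * PowerSeries.X) *
        (PowerSeries.derivative A
          (PowerSeries.mk fun k =>
            ((k.factorial : ℚ)⁻¹) • ∏ i ∈ Finset.range k, (b + (i : A) * a)))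
      = PowerSeries.C b *
        PowerSeries.mk (fun k =>
          ((k.factorial : ℚ)⁻¹) • ∏ i ∈ Finset.range k, (b + (i : A) * a)) := by
  ext n
  rw [sub_mul, one_mul, map_sub, mul_assoc, PowerSeries.coeff_C_mul,
    PowerSeries.coeff_C_mul, PowerSeries.coeff_derivative, PowerSeries.coeff_mk,
    PowerSeries.coeff_mk]
  rcases n with _ | n
  · simp [Finset.prod_range_succ]
  · rw [PowerSeries.coeff_succ_X_mul, PowerSeries.coeff_derivative, PowerSeries.coeff_mk]
    have hc : (((n+1 : ℕ) : A) + 1) = algebraMap ℚ A ((n : ℚ) + 1 + 1) := by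
      push_cast; simp
    have key : (((n : ℚ) + 1 + 1) * ((n + 1 + 1).factorial : ℚ)⁻¹) = ((n + 1).factorial : ℚ)⁻¹ := by
      rw [Nat.factorial_succ, mul_comm ((n:ℚ)+1+1)]
      push_cast
      rw [mul_inv, mul_comm ((n:ℚ)+1+1)⁻¹, mul_assoc,
        inv_mul_cancel₀ (by positivity), mul_one]
    rw [hc, mul_comm _ (algebraMap ℚ A _), ← Algebra.smul_def, smul_smul, key,
      Finset.prod_range_succ]
    push_cast
    rw [smul_mul_assoc, mul_smul_comm, mul_smul_comm, ← smul_sub]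
    congr 1
    ring
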